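/- Let C be a category with finite phased coproducts all of whose coprojections are monic, with transitive phases, and with a phase generator I. Then the assignment T_Â := { U : Â → Â | U is a phase of Â in C } is a choice of trivial isomorphisms on GP(C), and the functor [−] : GP(C) → C (sending Â = A +̇ I to A and f to the unique [f] with f ∘ κ_A = κ_B ∘ [f]) induces an equivalence of categories GP(C)/∼ ≃ C. -/

import Mathlib

open CategoryTheory CategoryTheory.Limits

universe v u

variable {C : Type u} [Category.{v} C]

/-- Binary phased coproduct. -/
structure IsPhasedCoproduct₂ (A B P : C) (κA : A ⟶ P) (κB : B ⟶ P) : Prop where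
  lift : ∀ {D : C} (f : A ⟶ D) (g : B ⟶ D), ∃ h : P ⟶ D, κA ≫ h = f ∧ κB ≫ h = g
  phase : ∀ {D : C} (h h' : P ⟶ D), κA ≫ h = κA ≫ h' → κB ≫ h = κB ≫ h' →
    ∃ U : P ⟶ P, (κA ≫ U = κA ∧ κB ≫ U = κB) ∧ h' = U ≫ h

/-- The category has phased coproducts of every pair of objects. -/
def HasPhasedCoproducts₂ (C : Type u) [Category.{v} C] : Prop :=
  ∀ A B : C, ∃ (P : C) (κA : A ⟶ P) (κB : B ⟶ P), IsPhasedCoproduct₂ A B P κA κB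

/-- All coprojections of binary phased coproducts are monic. -/
def MonicPhasedCoproducts (C : Type u) [Category.{v} C] : Prop :=
  ∀ {A B P : C} {κA : A ⟶ P} {κB : B ⟶ P},
    IsPhasedCoproduct₂ A B P κA κB → Mono κA ∧ Mono κB

/-- Transitive phases: diagonal morphisms intertwine phases with phases. -/
def PhasesTransitive (C : Type u) [Category.{v} C] : Prop :=
  ∀ {A B P : C} {κA : A ⟶ P} {κB : B ⟶ P} {A' B' P' : C} {κA' : A' ⟶ P'} {κB' : B' ⟶ P'},
    IsPhasedCoproduct₂ A B P κA κB → IsPhasedCoproduct₂ A' B' P' κA' κB' →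
    ∀ f : P ⟶ P', (∃ g, κA ≫ f = g ≫ κA') → (∃ h, κB ≫ f = h ≫ κB') →
    ∀ U : P ⟶ P, κA ≫ U = κA → κB ≫ U = κB →
    ∃ V : P' ⟶ P', (κA' ≫ V = κA' ∧ κB' ≫ V = κB') ∧ U ≫ f = f ≫ V

/-- Phase generator: codiagonals out of `Gen +̇ Gen` are phase monic, and diagonal
monomorphisms out of `Gen +̇ Gen` are phase epic. -/
structure IsPhaseGenerator (Gen : C) : Prop where
  phaseMonic : ∀ {P : C} {κ₁ κ₂ : Gen ⟶ P}, IsPhasedCoproduct₂ Gen Gen P κ₁ κ₂ →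
    ∀ d : P ⟶ Gen, κ₁ ≫ d = 𝟙 Gen → κ₂ ≫ d = 𝟙 Gen →
    ∀ U V : P ⟶ P, (κ₁ ≫ U = κ₁ ∧ κ₂ ≫ U = κ₂) → (κ₁ ≫ V = κ₁ ∧ κ₂ ≫ V = κ₂) →
      U ≫ d = V ≫ d → U = V
  phaseEpic : ∀ {P : C} {κ₁ κ₂ : Gen ⟶ P}, IsPhasedCoproduct₂ Gen Gen P κ₁ κ₂ →
    ∀ {A B Q : C} {κA : A ⟶ Q} {κB : B ⟶ Q}, IsPhasedCoproduct₂ A B Q κA κB →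
    ∀ m : P ⟶ Q, Mono m → (∃ g, κ₁ ≫ m = g ≫ κA) → (∃ h, κ₂ ≫ m = h ≫ κB) →
    ∀ U V : Q ⟶ Q, (κA ≫ U = κA ∧ κB ≫ U = κB) → (κA ≫ V = κA ∧ κB ≫ V = κB) →
      m ≫ U = m ≫ V → U = V

/-- Objects of the category `GP(C)`: phased coproducts of the form `A +̇ Gen`. -/
structure GPObj (C : Type u) [Category.{v} C] (Gen : C) where
  base : C
  tot : C
  ι : base ⟶ tot
  ιI : Gen ⟶ tot
  isPC : IsPhasedCoproduct₂ base Gen tot ι ιI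

/-- Morphisms of `GP(C)`: morphisms between the totals which preserve the
`Gen`-coprojection and are diagonal. -/
@[ext]
structure GPHom {C : Type u} [Category.{v} C] {Gen : C} (X Y : GPObj C Gen) where
  f : X.tot ⟶ Y.tot
  unit : X.ιI ≫ f = Y.ιI
  diag : ∃ g : X.base ⟶ Y.base, X.ι ≫ f = g ≫ Y.ι

instance {Gen : C} : Category (GPObj C Gen) where
  Hom := GPHom
  id X := ⟨𝟙 X.tot, Category.comp_id _, ⟨𝟙 X.base, by simp⟩⟩
  comp {X Y Z} f g := ⟨f.f ≫ g.f,
    by rw [← Category.assoc, f.unit, g.unit],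
    by
      obtain ⟨u, hu⟩ := f.diag
      obtain ⟨v, hv⟩ := g.diag
      exact ⟨u ≫ v, by rw [← Category.assoc, hu, Category.assoc, hv, ← Category.assoc]⟩⟩
  id_comp f := GPHom.ext (Category.id_comp f.f)
  comp_id f := GPHom.ext (Category.comp_id f.f)
  assoc f g h := GPHom.ext (Category.assoc f.f g.f h.f)

/-- The underlying morphism in `C` of a morphism of `GP(C)`. -/
def GPHom.tot {Gen : C} {X Y : GPObj C Gen} (f : X ⟶ Y) : X.tot ⟶ Y.tot :=
  GPHom.f f

/-- `u` is "the" diagonal component of the `GP(C)`-morphism `f`. -/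
def GPdiag {Gen : C} {X Y : GPObj C Gen} (f : X ⟶ Y) (u : X.base ⟶ Y.base) : Prop :=
  X.ι ≫ GPHom.tot f = u ≫ Y.ι

/-- A `GP(C)`-endomorphism which is a phase in `C`. -/
def GPisPhase {Gen : C} {X : GPObj C Gen} (U : X ⟶ X) : Prop :=
  X.ι ≫ GPHom.tot U = X.ι

/-- A choice of trivial isomorphisms on a category. -/
def IsTrivialIsos {D : Type*} [Category D] (T : ∀ A : D, Subgroup (Aut A)) : Prop :=
  ∀ {A B : D} (f : A ⟶ B), ∀ p ∈ T B, ∃ q ∈ T A, f ≫ p.hom = q.hom ≫ f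

/-- The congruence on `GP(C)` identifying morphisms differing by a phase:
`f ∼ g` iff `f = g ∘ U` for some phase `U`. -/
def GPphaseRel (C : Type u) [Category.{v} C] (Gen : C) : HomRel (GPObj C Gen) :=
  fun {X _} f g => ∃ U : X ⟶ X, GPisPhase U ∧ f = U ≫ g


section Aux

variable {Gen : C}

@[simp] lemma GPcomp_f {X Y Z : GPObj C Gen} (f : X ⟶ Y) (g : Y ⟶ Z) :
    (f ≫ g).f = f.f ≫ g.f := rfl

@[simp] lemma GPid_f (X : GPObj C Gen) : (𝟙 X : X ⟶ X).f = 𝟙 X.tot := rfl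

@[simp] lemma GPtot_eq {X Y : GPObj C Gen} (f : X ⟶ Y) : GPHom.tot f = f.f := rfl

/-- Every phase of a phased coproduct is invertible, with phase inverse. -/
lemma phase_inv {A B P : C} {κA : A ⟶ P} {κB : B ⟶ P}
    (h : IsPhasedCoproduct₂ A B P κA κB) {U : P ⟶ P}
    (hA : κA ≫ U = κA) (hB : κB ≫ U = κB) :
    ∃ W : P ⟶ P, (κA ≫ W = κA ∧ κB ≫ W = κB) ∧ U ≫ W = 𝟙 P ∧ W ≫ U = 𝟙 P := by
  obtain ⟨W, ⟨hWA, hWB⟩, hW⟩ := h.phase U (𝟙 P) (by simp [hA]) (by simp [hB])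
  obtain ⟨W₂, ⟨hW2A, hW2B⟩, hW2⟩ := h.phase W (𝟙 P) (by simp [hWA]) (by simp [hWB])
  have hU : W₂ = U := by
    calc W₂ = W₂ ≫ (W ≫ U) := by rw [← hW]; simp
    _ = (W₂ ≫ W) ≫ U := by simp
    _ = U := by rw [← hW2]; simp
  exact ⟨W, ⟨hWA, hWB⟩, by rw [← hU, ← hW2], hW.symm⟩

/-- Package a `C`-phase of `X.tot` as an automorphism of `X` in `GP(C)`. -/
lemma GPphase_aut (X : GPObj C Gen) {U : X.tot ⟶ X.tot}
    (hA : X.ι ≫ U = X.ι) (hI : X.ιI ≫ U = X.ιI) :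
    ∃ u : Aut X, GPHom.f u.hom = U ∧ GPisPhase u.hom := by
  obtain ⟨W, ⟨hWA, hWI⟩, hUW, hWU⟩ := phase_inv X.isPC hA hI
  refine ⟨⟨⟨U, hI, ⟨𝟙 _, by simp [hA]⟩⟩, ⟨W, hWI, ⟨𝟙 _, by simp [hWA]⟩⟩, ?_, ?_⟩, rfl, hA⟩
  · exact GPHom.ext hUW
  · exact GPHom.ext hWU

/-- The subgroup of phases. -/
def GPTrivs (Gen : C) : ∀ X : GPObj C Gen, Subgroup (Aut X) := fun X =>
  { carrier := {u | GPisPhase u.hom}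
    one_mem' := by
      show X.ι ≫ 𝟙 X.tot = X.ι
      simp
    mul_mem' := by
      intro a b ha hb
      show X.ι ≫ GPHom.tot (b.hom ≫ a.hom) = X.ι
      have ha' : X.ι ≫ a.hom.f = X.ι := ha
      have hb' : X.ι ≫ b.hom.f = X.ι := hb
      simp only [GPtot_eq, GPcomp_f, ← Category.assoc, hb', ha']
    inv_mem' := by
      intro a ha
      show X.ι ≫ GPHom.tot a.inv = X.ι
      have ha' : X.ι ≫ a.hom.f = X.ι := ha
      have h1 : a.hom ≫ a.inv = 𝟙 X := a.hom_inv_id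
      have h2 : a.hom.f ≫ a.inv.f = 𝟙 X.tot := by
        rw [← GPcomp_f, h1, GPid_f]
      calc X.ι ≫ GPHom.tot a.inv = (X.ι ≫ a.hom.f) ≫ a.inv.f := by rw [ha']; rfl
      _ = X.ι ≫ (a.hom.f ≫ a.inv.f) := by simp
      _ = X.ι := by rw [h2]; simp }

lemma GPdiag_spec {X Y : GPObj C Gen} (f : X ⟶ Y) :
    X.ι ≫ f.f = f.diag.choose ≫ Y.ι := f.diag.choose_spec

lemma GPdiag_unique (hmono : MonicPhasedCoproducts C) {X Y : GPObj C Gen} (f : X ⟶ Y)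
    {u : X.base ⟶ Y.base} (hu : X.ι ≫ f.f = u ≫ Y.ι) : f.diag.choose = u := by
  have : Mono Y.ι := (hmono Y.isPC).1
  exact (cancel_mono Y.ι).1 ((GPdiag_spec f).symm.trans hu)

/-- The functor sending a phased coproduct `A +̇ Gen` to `A`. -/
noncomputable def GPbaseFunctor (Gen : C) (hmono : MonicPhasedCoproducts C) :
    GPObj C Gen ⥤ C where
  obj X := X.base
  map {X Y} f := f.diag.choose
  map_id X := GPdiag_unique hmono (𝟙 X) (by simp)
  map_comp {X Y Z} f g := GPdiag_unique hmono (f ≫ g) (by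
    rw [GPcomp_f, ← Category.assoc]
    exact (congrArg (· ≫ g.f) (GPdiag_spec f)).trans ((Category.assoc _ _ _).trans
      ((congrArg (_ ≫ ·) (GPdiag_spec g)).trans (Category.assoc _ _ _).symm)))

lemma GPbaseFunctor_rel (Gen : C) (hmono : MonicPhasedCoproducts C) :
    ∀ (x y : GPObj C Gen) (f g : x ⟶ y), GPphaseRel C Gen f g →
      (GPbaseFunctor Gen hmono).map f = (GPbaseFunctor Gen hmono).map g := by
  intro X Y f g ⟨U, hU, hfg⟩
  have hU' : X.ι ≫ U.f = X.ι := hU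
  show f.diag.choose = g.diag.choose
  have hx : X.ι ≫ f.f = X.ι ≫ g.f := by
    rw [hfg, GPcomp_f, ← Category.assoc, hU']
  exact GPdiag_unique hmono f (hx.trans (GPdiag_spec g))

end Aux

/-- the phases form a choice of trivial isomorphisms on `GP(C)`, and the
functor `[−] : GP(C) ⥤ C` (sending `A +̇ Gen` to `A` and a morphism to its diagonal
component) induces an equivalence `GP(C)/∼ ≌ C`. -/
theorem stmt_9 (Gen : C)
    (hcop : HasPhasedCoproducts₂ C) (hinit : HasInitial C)
    (hmono : MonicPhasedCoproducts C) (htrans : PhasesTransitive C)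
    (hgen : IsPhaseGenerator Gen) :
    (∃ T : ∀ X : GPObj C Gen, Subgroup (Aut X),
      (∀ (X : GPObj C Gen) (u : Aut X), u ∈ T X ↔ GPisPhase u.hom) ∧
      IsTrivialIsos T) ∧
    (∃ (F : Quotient (GPphaseRel C Gen) ⥤ C)
       (hobj : ∀ X : GPObj C Gen,
         F.obj ((Quotient.functor (GPphaseRel C Gen)).obj X) = X.base),
      (∀ (X Y : GPObj C Gen) (f : X ⟶ Y),
        GPdiag f (eqToHom (hobj X).symm ≫
          F.map ((Quotient.functor (GPphaseRel C Gen)).map f) ≫ eqToHom (hobj Y))) ∧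
      F.IsEquivalence) := by
  constructor
  · -- phases are a choice of trivial isomorphisms
    refine ⟨GPTrivs Gen, fun X u => Iff.rfl, ?_⟩
    intro X Y f p hp
    have hp' : Y.ι ≫ p.hom.f = Y.ι := hp
    obtain ⟨g, hg⟩ := f.diag
    have e1 : X.ι ≫ (f.f ≫ p.hom.f) = X.ι ≫ f.f := by
      rw [← Category.assoc, hg, Category.assoc, hp']
    have e2 : X.ιI ≫ (f.f ≫ p.hom.f) = X.ιI ≫ f.f := by
      rw [← Category.assoc, f.unit, p.hom.unit]
    obtain ⟨U, ⟨hUA, hUI⟩, hU⟩ := X.isPC.phase f.f (f.f ≫ p.hom.f) e1.symm e2.symm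
    obtain ⟨q, hqf, hqph⟩ := GPphase_aut X hUA hUI
    refine ⟨q, hqph, GPHom.ext ?_⟩
    rw [GPcomp_f, GPcomp_f, hqf, hU]
  · -- the equivalence
    refine ⟨CategoryTheory.Quotient.lift _ (GPbaseFunctor Gen hmono)
      (GPbaseFunctor_rel Gen hmono), fun X => rfl, ?_, ?_⟩
    · intro X Y f
      show X.ι ≫ GPHom.tot f = _ ≫ Y.ι
      rw [CategoryTheory.Quotient.lift_map_functor_map]
      exact (GPdiag_spec f).trans (congrArg (· ≫ Y.ι)
        ((Category.id_comp (_ ≫ 𝟙 _)).trans (Category.comp_id _)).symm)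
    · refine { faithful := ⟨?_⟩, full := ⟨?_⟩, essSurj := ⟨?_⟩ }
      · -- faithful
        intro X Y f g hfg
        obtain ⟨f', rfl⟩ := (CategoryTheory.Quotient.functor
          (GPphaseRel C Gen)).map_surjective f
        obtain ⟨g', rfl⟩ := (CategoryTheory.Quotient.functor
          (GPphaseRel C Gen)).map_surjective g
        rw [CategoryTheory.Quotient.lift_map_functor_map,
          CategoryTheory.Quotient.lift_map_functor_map] at hfg
        -- hfg : diagonal components agree
        have e1 : X.as.ι ≫ g'.f = X.as.ι ≫ f'.f := by
          rw [GPdiag_spec f', GPdiag_spec g']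
          show g'.diag.choose ≫ _ = f'.diag.choose ≫ _
          rw [show f'.diag.choose = g'.diag.choose from hfg]
        have e2 : X.as.ιI ≫ g'.f = X.as.ιI ≫ f'.f := by
          rw [f'.unit, g'.unit]
        obtain ⟨U, ⟨hUA, hUI⟩, hU⟩ := X.as.isPC.phase g'.f f'.f e1 e2
        refine CategoryTheory.Quotient.sound _
          ⟨⟨U, hUI, ⟨𝟙 _, by simp [hUA]⟩⟩, hUA, GPHom.ext ?_⟩
        rw [GPcomp_f]
        exact hU
      · -- full
        intro X Y u
        obtain ⟨h, hA, hI⟩ := X.as.isPC.lift (u ≫ Y.as.ι) Y.as.ιI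
        refine ⟨(CategoryTheory.Quotient.functor (GPphaseRel C Gen)).map
          ⟨h, hI, ⟨u, hA⟩⟩, ?_⟩
        rw [CategoryTheory.Quotient.lift_map_functor_map]
        exact GPdiag_unique hmono _ hA
      · -- essentially surjective
        intro A
        obtain ⟨P, κA, κI, hpc⟩ := hcop A Gen
        exact ⟨(CategoryTheory.Quotient.functor (GPphaseRel C Gen)).obj
          ⟨A, P, κA, κI, hpc⟩, ⟨Iso.refl A⟩⟩
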